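/- Let μ be a Borel probability measure on the closed unit disc D = {z ∈ ℂ : |z| ≤ 1} such that μ({ζ}) = 0 for every ζ ∈ ℂ with |ζ| = 1. Then there exists a ∈ ℂ with |a| < 1 such that ∫_D (z − a)/(1 − conj(a)·z) dμ(z) = 0. -/

import Mathlib

open MeasureTheory Complex ComplexConjugate
open scoped ENNReal

namespace CGaux

lemma norm_w_le {a z : ℂ} (ha : ‖a‖ ≤ 1) (hz : ‖z‖ ≤ 1) :
    ‖(1:ℂ) - conj a * z‖ ≤ 2 := by
  calc ‖(1:ℂ) - conj a * z‖ ≤ ‖(1:ℂ)‖ + ‖conj a * z‖ := norm_sub_le _ _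
    _ ≤ 1 + 1 * 1 := by
        rw [norm_one, norm_mul, RCLike.norm_conj]
        gcongr
    _ = 2 := by norm_num

lemma le_norm_w {a z : ℂ} (hz : ‖z‖ ≤ 1) :
    1 - ‖a‖ ≤ ‖(1:ℂ) - conj a * z‖ := by
  have h := norm_sub_norm_le (1:ℂ) (conj a * z)
  rw [norm_one, norm_mul, RCLike.norm_conj] at h
  nlinarith [norm_nonneg a, norm_nonneg z, mul_le_of_le_one_right (norm_nonneg a) hz]

lemma normSq_w_lb {a z : ℂ} (ha : ‖a‖ < 1) (hz : ‖z‖ ≤ 1) :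
    (1 - ‖a‖)^2 ≤ normSq (1 - conj a * z) := by
  rw [normSq_eq_norm_sq]
  have h := le_norm_w (a := a) hz
  nlinarith [norm_nonneg ((1:ℂ) - conj a * z)]

lemma normSq_w_ub {a z : ℂ} (ha : ‖a‖ ≤ 1) (hz : ‖z‖ ≤ 1) :
    normSq (1 - conj a * z) ≤ 4 := by
  rw [normSq_eq_norm_sq]
  nlinarith [norm_w_le ha hz, norm_nonneg ((1:ℂ) - conj a * z)]

lemma w_ne_zero {a z : ℂ} (ha : ‖a‖ < 1) (hz : ‖z‖ ≤ 1) :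
    (1:ℂ) - conj a * z ≠ 0 := by
  intro h
  have := le_norm_w (a := a) hz
  rw [h, norm_zero] at this
  linarith

lemma normSq_w_ne_zero {a z : ℂ} (ha : ‖a‖ < 1) (hz : ‖z‖ ≤ 1) :
    normSq (1 - conj a * z) ≠ 0 := by
  simpa [Complex.normSq_eq_zero] using w_ne_zero ha hz

lemma log_bound {a z : ℂ} {r : ℝ} (ha : ‖a‖ ≤ r) (hr : r < 1) (hz : ‖z‖ ≤ 1) :
    |Real.log (normSq (1 - conj a * z))| ≤ |Real.log ((1 - r)^2)| + Real.log 4 := by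
  have ha1 : ‖a‖ < 1 := lt_of_le_of_lt ha hr
  have hlo : (0:ℝ) < (1 - r)^2 := by nlinarith
  have h1 : (1 - r)^2 ≤ normSq (1 - conj a * z) := by
    refine le_trans ?_ (normSq_w_lb ha1 hz)
    have : 1 - r ≤ 1 - ‖a‖ := by linarith
    nlinarith [norm_nonneg a]
  have h2 : normSq (1 - conj a * z) ≤ 4 := normSq_w_ub ha1.le hz
  rw [abs_le]
  constructor
  · have := Real.log_le_log hlo h1
    have hneg : -|Real.log ((1-r)^2)| ≤ Real.log ((1-r)^2) := neg_abs_le _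
    have h4 : (0:ℝ) ≤ Real.log 4 := Real.log_nonneg (by norm_num)
    linarith
  · have := Real.log_le_log (lt_of_lt_of_le hlo h1) h2
    have : Real.log (normSq (1 - conj a * z)) ≤ Real.log 4 := this
    have h0 : (0:ℝ) ≤ |Real.log ((1-r)^2)| := abs_nonneg _
    linarith

lemma measurable_phi (a : ℂ) :
    Measurable (fun z : ℂ => Real.log (normSq (1 - conj a * z))) := by
  exact Real.measurable_log.comp
    ((Complex.continuous_normSq.comp
      (continuous_const.sub (continuous_const.mul continuous_id))).measurable)

lemma integrable_phi (ν : Measure ℂ) [IsFiniteMeasure ν]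
    (hae : ∀ᵐ z ∂ν, ‖z‖ ≤ 1) {a : ℂ} {r : ℝ} (ha : ‖a‖ ≤ r) (hr : r < 1) :
    Integrable (fun z : ℂ => Real.log (normSq (1 - conj a * z))) ν := by
  refine Integrable.mono' (integrable_const (|Real.log ((1 - r)^2)| + Real.log 4))
    (measurable_phi a).aestronglyMeasurable ?_
  filter_upwards [hae] with z hz
  simpa [Real.norm_eq_abs] using log_bound ha hr hz

lemma aux_normSq (x y : ℂ) (t : ℝ) :
    normSq (x - t • y) = normSq x + (-(2*(x * conj y).re))*t + normSq y * t^2 := by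
  rw [Complex.real_smul, normSq_sub, normSq_mul, normSq_ofReal]
  simp only [map_mul, Complex.conj_ofReal, Complex.mul_re, Complex.mul_im, Complex.ofReal_re, Complex.ofReal_im]
  ring

lemma hasDerivAt_quad (c0 c1 c2 : ℝ) (t : ℝ) :
    HasDerivAt (fun s : ℝ => c0 + c1*s + c2*s^2) (c1 + 2*c2*t) t := by
  have h := (((hasDerivAt_id t).const_mul c1).const_add c0).add
    ((hasDerivAt_pow 2 t).const_mul c2)
  convert h using 1
  · rfl
  · rfl
  · rfl
  · norm_num
    ring

lemma hasDerivAt_logNormSq (x y : ℂ) (t : ℝ) (hx : normSq (x - t • y) ≠ 0) :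
    HasDerivAt (fun s : ℝ => Real.log (normSq (x - s • y)))
      ((-(2*(x * conj y).re) + 2 * normSq y * t) / normSq (x - t • y)) t := by
  have h0 : (fun s : ℝ => normSq (x - s • y))
      = fun s : ℝ => normSq x + (-(2*(x * conj y).re))*s + normSq y * s^2 :=
    funext fun s => aux_normSq x y s
  have h1 := hasDerivAt_quad (normSq x) (-(2*(x * conj y).re)) (normSq y) t
  have h2 : HasDerivAt (fun s : ℝ => normSq (x - s • y))
      (-(2*(x * conj y).re) + 2 * normSq y * t) t := by
    rw [h0]
    convert h1 using 1 <;> ring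
  exact h2.log hx


lemma normSq_w_lb' {b z : ℂ} {r : ℝ} (hb : ‖b‖ ≤ r) (hr : r < 1) (hz : ‖z‖ ≤ 1) :
    (1 - r)^2 ≤ normSq (1 - conj b * z) := by
  refine le_trans ?_ (normSq_w_lb (lt_of_le_of_lt hb hr) hz)
  nlinarith [norm_nonneg b]

lemma normSq_lt_one {a : ℂ} (ha : ‖a‖ < 1) : normSq a < 1 := by
  rw [normSq_eq_norm_sq]
  nlinarith [norm_nonneg a]

lemma conj_add_smul (a v : ℂ) (t : ℝ) (z : ℂ) :
    (1:ℂ) - conj (a + t • v) * z = (1 - conj a * z) - t • (conj v * z) := by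
  simp only [map_add, Complex.real_smul, map_mul, Complex.conj_ofReal]
  ring

lemma re_div_identity (v z w : ℂ) :
    (-(2*(w * conj (conj v * z)).re)) / normSq w = -2 * (conj v * (z / w)).re := by
  have h1 : w * conj (conj v * z) = conj (conj v * z * conj w) := by
    simp only [map_mul, Complex.conj_conj]
    ring
  have h2 : conj v * (z / w) = (conj v * z * conj w) * ((normSq w)⁻¹ : ℝ) := by
    rw [div_eq_mul_inv, Complex.inv_def, Complex.ofReal_inv]
    ring
  rw [h1, Complex.conj_re, h2]
  simp only [Complex.mul_re, Complex.ofReal_re, Complex.ofReal_im, mul_zero, sub_zero]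
  rw [div_eq_mul_inv]
  ring

lemma measurable_integrand (a v : ℂ) :
    Measurable (fun z : ℂ =>
      (-(2*((1 - conj a * z) * conj (conj v * z)).re)) / normSq (1 - conj a * z)) := by
  have hw : Measurable (fun z : ℂ => (1:ℂ) - conj a * z) :=
    (continuous_const.sub (continuous_const.mul continuous_id)).measurable
  have hu : Measurable (fun z : ℂ => conj (conj v * z)) :=
    (Complex.continuous_conj.comp (continuous_const.mul continuous_id)).measurable
  exact ((((hw.mul hu).re).const_mul 2).neg).div (Complex.continuous_normSq.measurable.comp hw)

lemma hasDerivAt_logOneSub (a v : ℂ) (ha : ‖a‖ < 1) :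
    HasDerivAt (fun t : ℝ => -Real.log (1 - normSq (a + t • v)))
      (2*(a * conj v).re / (1 - normSq a)) 0 := by
  have h0 : (fun t : ℝ => 1 - normSq (a + t • v))
      = fun t : ℝ => (1 - normSq a) + (-(2*(a*conj v).re))*t + (-(normSq v))*t^2 := by
    funext t
    have h := aux_normSq a (-v) t
    rw [smul_neg, sub_neg_eq_add] at h
    simp only [map_neg, mul_neg, neg_neg, normSq_neg, Complex.neg_re] at h
    rw [h]
    ring
  have h1 := hasDerivAt_quad (1 - normSq a) (-(2*(a*conj v).re)) (-(normSq v)) 0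
  have h2 : HasDerivAt (fun t : ℝ => 1 - normSq (a + t • v)) (-(2*(a*conj v).re)) 0 := by
    rw [h0]
    convert h1 using 1 <;> ring
  have hne : (1:ℝ) - normSq (a + (0:ℝ) • v) ≠ 0 := by
    simp only [zero_smul, add_zero]
    have := normSq_lt_one ha
    linarith
  have h3 := (h2.log hne).neg
  convert h3 using 1
  · rfl
  · rfl
  · rfl
  simp only [zero_smul, add_zero, neg_div, neg_neg]

lemma deriv_under_integral (ν : Measure ℂ) [IsProbabilityMeasure ν]
    (hae : ∀ᵐ z ∂ν, ‖z‖ ≤ 1) {a : ℂ} (ha : ‖a‖ < 1) (v : ℂ) (hv : ‖v‖ = 1) :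
    Integrable (fun z : ℂ =>
        (-(2*((1 - conj a * z) * conj (conj v * z)).re)) / normSq (1 - conj a * z)) ν ∧
      HasDerivAt (fun t : ℝ => ∫ z, Real.log (normSq (1 - conj (a + t • v) * z)) ∂ν)
        (∫ z, (-(2*((1 - conj a * z) * conj (conj v * z)).re)) / normSq (1 - conj a * z) ∂ν)
        0 := by
  have hε : (0:ℝ) < (1 - ‖a‖)/2 := by linarith
  have hr'1 : (1 + ‖a‖)/2 < 1 := by linarith
  have hr'0 : (0:ℝ) < 1 - (1 + ‖a‖)/2 := by linarith
  set F : ℝ → ℂ → ℝ :=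
    fun t z => Real.log (normSq ((1 - conj a * z) - t • (conj v * z))) with hF
  set F' : ℝ → ℂ → ℝ := fun t z =>
    (-(2*((1 - conj a * z) * conj (conj v * z)).re) + 2 * normSq (conj v * z) * t)
      / normSq ((1 - conj a * z) - t • (conj v * z)) with hF'
  have key : ∀ t : ℝ, |t| ≤ (1 - ‖a‖)/2 → ∀ z : ℂ, ‖z‖ ≤ 1 →
      (1 - (1+‖a‖)/2)^2 ≤ normSq ((1 - conj a * z) - t • (conj v * z)) := by
    intro t ht z hz
    have h1 : (1 - conj a * z) - t • (conj v * z) = 1 - conj (a + t • v) * z :=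
      (conj_add_smul a v t z).symm
    have h2 : ‖a + t • v‖ ≤ (1+‖a‖)/2 := by
      calc ‖a + t • v‖ ≤ ‖a‖ + ‖t • v‖ := norm_add_le _ _
        _ = ‖a‖ + |t| * 1 := by rw [norm_smul, Real.norm_eq_abs, hv]
        _ ≤ (1+‖a‖)/2 := by linarith
    rw [h1]
    exact normSq_w_lb' h2 hr'1 hz
  have hdenpos : (0:ℝ) < (1 - (1+‖a‖)/2)^2 := by positivity
  have hF'0 : F' 0 = fun z : ℂ =>
      (-(2*((1 - conj a * z) * conj (conj v * z)).re)) / normSq (1 - conj a * z) := by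
    funext z
    simp [hF']
  have hF0 : F 0 = fun z : ℂ => Real.log (normSq (1 - conj a * z)) := by
    funext z
    simp [hF]
  have hmeas : ∀ t : ℝ, Measurable (F t) := by
    intro t
    have hwz : Measurable fun z : ℂ => (1 - conj a * z) - t • (conj v * z) :=
      ((continuous_const.sub (continuous_const.mul continuous_id)).sub
        ((continuous_const.mul continuous_id).const_smul t)).measurable
    exact Real.measurable_log.comp (Complex.continuous_normSq.measurable.comp hwz)
  have hbound : ∀ᵐ z ∂ν, ∀ t ∈ Metric.ball (0:ℝ) ((1 - ‖a‖)/2),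
      ‖F' t z‖ ≤ 6 / (1 - (1+‖a‖)/2)^2 := by
    filter_upwards [hae] with z hz t ht
    rw [Metric.mem_ball, Real.dist_eq, sub_zero] at ht
    have ht' : |t| ≤ (1 - ‖a‖)/2 := ht.le
    have hden := key t ht' z hz
    have hy : ‖conj v * z‖ ≤ 1 := by
      rw [norm_mul, RCLike.norm_conj, hv, one_mul]; exact hz
    have hre : |((1 - conj a * z) * conj (conj v * z)).re| ≤ 2 := by
      calc |((1 - conj a * z) * conj (conj v * z)).re|
          ≤ ‖(1 - conj a * z) * conj (conj v * z)‖ := Complex.abs_re_le_norm _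
        _ = ‖(1:ℂ) - conj a * z‖ * ‖conj (conj v * z)‖ := norm_mul _ _
        _ ≤ 2 * 1 := by
            rw [RCLike.norm_conj]
            exact mul_le_mul (norm_w_le ha.le hz) hy (norm_nonneg _) (by norm_num)
        _ = 2 := by norm_num
    have h3 : normSq (conj v * z) ≤ 1 := by
      rw [normSq_eq_norm_sq]
      nlinarith [norm_nonneg (conj v * z)]
    have h4 : |t| ≤ 1 := le_trans ht' (by nlinarith [norm_nonneg a])
    have hst : |normSq (conj v * z) * t| ≤ 1 := by
      rw [abs_mul, _root_.abs_of_nonneg (normSq_nonneg _)]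
      nlinarith [normSq_nonneg (conj v * z), abs_nonneg t]
    have hnum : |(-(2*((1 - conj a * z) * conj (conj v * z)).re)
        + 2 * normSq (conj v * z) * t)| ≤ 6 := by
      rw [abs_le] at hre hst ⊢
      constructor <;> nlinarith
    rw [hF', Real.norm_eq_abs, abs_div, _root_.abs_of_nonneg (normSq_nonneg _)]
    exact div_le_div₀ (by norm_num) hnum hdenpos hden
  have hdiff : ∀ᵐ z ∂ν, ∀ t ∈ Metric.ball (0:ℝ) ((1 - ‖a‖)/2),
      HasDerivAt (fun s => F s z) (F' t z) t := by
    filter_upwards [hae] with z hz t ht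
    rw [Metric.mem_ball, Real.dist_eq, sub_zero] at ht
    exact hasDerivAt_logNormSq _ _ t (lt_of_lt_of_le hdenpos (key t ht.le z hz)).ne'
  obtain ⟨hint, hder⟩ := hasDerivAt_integral_of_dominated_loc_of_deriv_le (Metric.ball_mem_nhds 0 hε)
    (Filter.Eventually.of_forall fun t => (hmeas t).aestronglyMeasurable)
    (by rw [hF0]; exact integrable_phi ν hae le_rfl ha)
    (by rw [hF'0]; exact (measurable_integrand a v).aestronglyMeasurable)
    hbound (integrable_const _) hdiff
  rw [hF'0] at hint hder
  refine ⟨hint, ?_⟩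
  have heq : (fun t : ℝ => ∫ z, Real.log (normSq (1 - conj (a + t • v) * z)) ∂ν)
      = fun t : ℝ => ∫ z, F t z ∂ν := by
    funext t
    simp only [hF, conj_add_smul]
  rw [heq]
  exact hder

lemma integrable_div (ν : Measure ℂ) [IsProbabilityMeasure ν]
    (hae : ∀ᵐ z ∂ν, ‖z‖ ≤ 1) {a : ℂ} (ha : ‖a‖ < 1) :
    Integrable (fun z : ℂ => z / (1 - conj a * z)) ν := by
  have hw : Measurable (fun z : ℂ => (1:ℂ) - conj a * z) :=
    (continuous_const.sub (continuous_const.mul continuous_id)).measurable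
  refine Integrable.mono' (integrable_const (1/(1 - ‖a‖)))
    (measurable_id.div hw).aestronglyMeasurable ?_
  filter_upwards [hae] with z hz
  rw [norm_div]
  exact div_le_div₀ (by positivity) hz (by linarith) (le_norm_w hz)

lemma final_identity {a z : ℂ} (ha : ‖a‖ < 1) (hz : ‖z‖ ≤ 1) :
    (z - a) / (1 - conj a * z)
      = ((1 - normSq a : ℝ) : ℂ) * (z / (1 - conj a * z)) - a := by
  have hw := w_ne_zero ha hz
  rw [Complex.ofReal_sub, Complex.ofReal_one, ← Complex.mul_conj]
  rw [eq_sub_iff_add_eq, div_add' _ _ _ hw, mul_div_assoc']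
  congr 1
  ring

lemma continuousAt_integral_log (ν : Measure ℂ) [IsProbabilityMeasure ν]
    (hae : ∀ᵐ z ∂ν, ‖z‖ ≤ 1) {a : ℂ} (ha : ‖a‖ < 1) :
    ContinuousAt (fun x : ℂ => ∫ z, Real.log (normSq (1 - conj x * z)) ∂ν) a := by
  have hr'1 : (1 + ‖a‖)/2 < 1 := by linarith
  apply continuousAt_of_dominated
    (bound := fun _ : ℂ => |Real.log ((1 - (1 + ‖a‖)/2)^2)| + Real.log 4)
  · exact Filter.Eventually.of_forall fun x => (measurable_phi x).aestronglyMeasurable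
  · have hball : Metric.ball a ((1-‖a‖)/2) ∈ nhds a := Metric.ball_mem_nhds _ (by linarith)
    filter_upwards [hball] with x hx
    have hxr : ‖x‖ ≤ (1 + ‖a‖)/2 := by
      rw [Metric.mem_ball, Complex.dist_eq] at hx
      calc ‖x‖ = ‖(x - a) + a‖ := by ring_nf
        _ ≤ ‖x - a‖ + ‖a‖ := norm_add_le _ _
        _ ≤ (1 + ‖a‖)/2 := by linarith
    filter_upwards [hae] with z hz
    simpa [Real.norm_eq_abs] using log_bound hxr hr'1 hz
  · exact integrable_const _
  · filter_upwards [hae] with z hz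
    have hcont : ContinuousAt (fun x : ℂ => normSq (1 - conj x * z)) a :=
      (Complex.continuous_normSq.comp
        (continuous_const.sub (Complex.continuous_conj.mul continuous_const))).continuousAt
    exact ContinuousAt.comp (x := a) (Real.continuousAt_log (normSq_w_ne_zero ha hz)) hcont

lemma small_cap (ν : Measure ℂ) [IsProbabilityMeasure ν]
    (hatom : ∀ ζ : ℂ, ‖ζ‖ = 1 → ν {ζ} = 0) :
    ∀ ζ : ℂ, ‖ζ‖ = 1 → ∃ δ : ℝ, 0 < δ ∧ δ ≤ 1/2 ∧
      (ν (Metric.closedBall ζ (2*δ))).toReal < 1/2 := by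
  intro ζ hζ
  have hInter : ⋂ n : ℕ, Metric.closedBall ζ (1/(n+1)) = {ζ} := by
    ext z
    simp only [Set.mem_iInter, Metric.mem_closedBall, Set.mem_singleton_iff]
    constructor
    · intro hz
      have h0 : dist z ζ ≤ 0 := by
        refine ge_of_tendsto tendsto_one_div_add_atTop_nhds_zero_nat ?_
        exact Filter.Eventually.of_forall fun n => hz n
      exact dist_eq_zero.mp (le_antisymm h0 dist_nonneg)
    · intro h n
      rw [h, dist_self]
      positivity
  have hmono : Antitone (fun n : ℕ => Metric.closedBall ζ (1/(n+1))) := by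
    intro m n hmn
    apply Metric.closedBall_subset_closedBall
    have h1 : (m:ℝ)+1 ≤ (n:ℝ)+1 := by exact_mod_cast Nat.succ_le_succ hmn
    exact one_div_le_one_div_of_le (by positivity) h1
  have htend := MeasureTheory.tendsto_measure_iInter_atTop
    (fun n : ℕ => (measurableSet_closedBall).nullMeasurableSet) hmono
    ⟨0, (measure_ne_top ν _)⟩
  rw [hInter, hatom ζ hζ] at htend
  have hev : ∀ᶠ n : ℕ in Filter.atTop,
      ν (Metric.closedBall ζ (1/(n+1))) < 1/2 :=
    htend.eventually_lt_const (by norm_num)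
  obtain ⟨n, hn⟩ := hev.exists
  refine ⟨1/(2*((n:ℝ)+1)), by positivity, ?_, ?_⟩
  · rw [div_le_div_iff₀ (by positivity) (by norm_num)]
    have : (0:ℝ) ≤ (n:ℝ) := Nat.cast_nonneg n
    linarith
  · have h2δ : 2*(1/(2*((n:ℝ)+1))) = 1/((n:ℝ)+1) := by
      field_simp
    rw [h2δ]
    have := (ENNReal.toReal_lt_toReal (measure_ne_top ν _)
      (by norm_num : (1/2 : ℝ≥0∞) ≠ ⊤)).mpr hn
    convert this using 1
    norm_num [ENNReal.toReal_div]

set_option maxHeartbeats 1000000 in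
lemma coercive (ν : Measure ℂ) [IsProbabilityMeasure ν] (hae : ∀ᵐ z ∂ν, ‖z‖ ≤ 1)
    (hatom : ∀ ζ : ℂ, ‖ζ‖ = 1 → ν {ζ} = 0) :
    ∃ r : ℝ, 0 < r ∧ r < 1 ∧ ∀ a : ℂ, r ≤ ‖a‖ → ‖a‖ < 1 →
      0 < (∫ z, Real.log (normSq (1 - conj a * z)) ∂ν) - Real.log (1 - normSq a) := by
  classical
  choose! δ hδpos hδhalf hδcap using small_cap ν hatom
  have hcov : Metric.sphere (0:ℂ) 1 ⊆
      ⋃ ζ ∈ Metric.sphere (0:ℂ) 1, Metric.ball ζ (δ ζ) := by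
    intro ζ hζ
    exact Set.mem_biUnion hζ (Metric.mem_ball_self (hδpos ζ (by simpa using hζ)))
  obtain ⟨T, hTsub, hTfin, hTcov⟩ := (isCompact_sphere (0:ℂ) 1).elim_finite_subcover_image
    (fun ζ _ => Metric.isOpen_ball) hcov
  set s : Finset ℂ := hTfin.toFinset with hs
  have hmemnorm : ∀ ζ ∈ s, ‖ζ‖ = 1 := by
    intro ζ hζ
    have := hTsub ((Set.Finite.mem_toFinset hTfin).mp hζ)
    simpa using this
  have hsne : s.Nonempty := by
    have hone : (1:ℂ) ∈ Metric.sphere (0:ℂ) 1 := by simp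
    obtain ⟨ζ, hζT, _⟩ := Set.mem_iUnion₂.mp (hTcov hone)
    exact ⟨ζ, (Set.Finite.mem_toFinset hTfin).mpr hζT⟩
  set δmin := s.inf' hsne δ with hδmin
  have hδminpos : 0 < δmin :=
    (Finset.lt_inf'_iff hsne).mpr fun ζ hζ => hδpos ζ (hmemnorm ζ hζ)
  have hδminhalf : δmin ≤ 1/2 := by
    obtain ⟨ζ0, hζ0⟩ := hsne
    exact (Finset.inf'_le δ hζ0).trans (hδhalf ζ0 (hmemnorm ζ0 hζ0))
  set β := s.sup' hsne (fun ζ => (ν (Metric.closedBall ζ (2*δ ζ))).toReal) with hβdef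
  have hβ : β < 1/2 := by
    rw [hβdef, Finset.sup'_lt_iff]
    exact fun ζ hζ => hδcap ζ (hmemnorm ζ hζ)
  have hβ0 : 0 ≤ β := by
    obtain ⟨ζ0, hζ0⟩ := hsne
    exact le_trans ENNReal.toReal_nonneg (Finset.le_sup' (fun ζ => (ν (Metric.closedBall ζ (2*δ ζ))).toReal) hζ0)
  set c := Real.log ((δmin/2)^2) with hc
  have hc0 : c ≤ 0 := Real.log_nonpos (by positivity) (by nlinarith)
  set K := (Real.log 2 - c)/(2*β - 1) with hK
  have h2β : 2*β - 1 < 0 := by linarith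
  set r := max (max (1/2) (1 - δmin/2)) (1 - Real.exp K / 2) with hr
  have hr1 : r < 1 :=
    max_lt (max_lt (by norm_num) (by linarith)) (by linarith [Real.exp_pos K])
  refine ⟨r, lt_of_lt_of_le (by norm_num) ((le_max_left _ _).trans (le_max_left _ _)), hr1, ?_⟩
  intro a hra ha1
  have hrhalf : (1:ℝ)/2 ≤ r := (le_max_left _ _).trans (le_max_left _ _)
  have hna : 0 < ‖a‖ := by linarith
  have ha0 : a ≠ 0 := by
    intro h
    rw [h, norm_zero] at hna
    exact lt_irrefl _ hna
  set ζa : ℂ := (‖a‖⁻¹ : ℝ) • a with hζa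
  have hζanorm : ‖ζa‖ = 1 := by
    rw [hζa, norm_smul, Real.norm_eq_abs, abs_inv, abs_norm]
    exact inv_mul_cancel₀ hna.ne'
  have hζasphere : ζa ∈ Metric.sphere (0:ℂ) 1 := by
    simp [mem_sphere_zero_iff_norm, hζanorm]
  obtain ⟨ζ, hζT, hζball⟩ := Set.mem_iUnion₂.mp (hTcov hζasphere)
  have hζs : ζ ∈ s := (Set.Finite.mem_toFinset hTfin).mpr hζT
  have hδζ : δmin ≤ δ ζ := Finset.inf'_le δ hζs
  have hβζ : (ν (Metric.closedBall ζ (2*δ ζ))).toReal ≤ β := Finset.le_sup' (fun ζ => (ν (Metric.closedBall ζ (2*δ ζ))).toReal) hζs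
  have h1a : 0 < 1 - ‖a‖ := by linarith
  have hδm2 : 1 - r ≤ δmin/2 := by
    have h := (le_max_right (1/2) (1 - δmin/2)).trans (le_max_left _ _ : max (1/2) (1-δmin/2) ≤ r)
    linarith
  have hra2 : 1 - ‖a‖ ≤ δmin/2 := by linarith
  set L := Real.log (1 - ‖a‖) with hL
  have hL0 : L ≤ 0 := Real.log_nonpos h1a.le (by linarith)
  have hLK : L < K := by
    have h2 : 1 - r ≤ Real.exp K / 2 := by
      have := le_max_right (max (1/2) (1 - δmin/2)) (1 - Real.exp K / 2)
      have h3 : 1 - Real.exp K / 2 ≤ r := this.trans (le_of_eq hr.symm)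
      linarith
    have h3 : 1 - ‖a‖ < Real.exp K := by linarith [Real.exp_pos K]
    calc L < Real.log (Real.exp K) := Real.log_lt_log h1a h3
      _ = K := Real.log_exp K
  set C := Metric.closedBall ζ (2*δ ζ) with hC
  have hCmeas : MeasurableSet C := measurableSet_closedBall
  have hint : Integrable (fun z : ℂ => Real.log (normSq (1 - conj a * z))) ν :=
    integrable_phi ν hae le_rfl ha1
  -- estimate on the cap C
  have hptC : ∀ᵐ z ∂(ν.restrict C),
      Real.log ((1-‖a‖)^2) ≤ Real.log (normSq (1 - conj a * z)) := by
    filter_upwards [ae_restrict_of_ae hae] with z hz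
    exact Real.log_le_log (by positivity) (normSq_w_lb ha1 hz)
  have hbd1 : Real.log ((1-‖a‖)^2) * (ν C).toReal
      ≤ ∫ z in C, Real.log (normSq (1 - conj a * z)) ∂ν := by
    have := setIntegral_mono_ae_restrict (integrableOn_const (measure_ne_top _ _))
      hint.integrableOn hptC
    calc Real.log ((1-‖a‖)^2) * (ν C).toReal
        = ∫ _ in C, Real.log ((1-‖a‖)^2) ∂ν := by
          rw [setIntegral_const, smul_eq_mul, mul_comm, Measure.real]
      _ ≤ _ := this
  -- estimate off the cap
  have hptCc : ∀ᵐ z ∂(ν.restrict Cᶜ),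
      c ≤ Real.log (normSq (1 - conj a * z)) := by
    filter_upwards [ae_restrict_of_ae hae, ae_restrict_mem hCmeas.compl] with z hz hzC
    have hzd : 2*δ ζ < dist z ζ := by
      by_contra hcon
      push_neg at hcon
      exact hzC (Metric.mem_closedBall.mpr hcon)
    have hζaζ : dist ζa ζ < δ ζ := Metric.mem_ball.mp hζball
    have e2 : ‖(1:ℂ) - conj ζa * z‖ = ‖ζa - z‖ := by
      have hn1 : normSq ζa = 1 := by
        rw [normSq_eq_norm_sq, hζanorm]
        norm_num
      have e1 : (1:ℂ) - conj ζa * z = conj ζa * (ζa - z) := by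
        rw [mul_sub, mul_comm ((starRingEnd ℂ) ζa) ζa, Complex.mul_conj, hn1]
        norm_num
      rw [e1, norm_mul, RCLike.norm_conj, hζanorm, one_mul]
    have e3 : δ ζ < ‖ζa - z‖ := by
      have h4 : dist z ζ ≤ dist z ζa + dist ζa ζ := dist_triangle _ _ _
      have : ‖ζa - z‖ = dist z ζa := by rw [dist_comm, dist_eq_norm]
      linarith
    have e4 : ‖a - ζa‖ = 1 - ‖a‖ := by
      have h5 : a - ζa = (1 - ‖a‖⁻¹ : ℝ) • a := by
        rw [hζa, sub_smul, one_smul]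
      have h6 : ‖a‖⁻¹ * ‖a‖ = 1 := inv_mul_cancel₀ hna.ne'
      have h7 : (1:ℝ) ≤ ‖a‖⁻¹ := (one_le_inv₀ hna).2 ha1.le
      rw [h5, norm_smul, Real.norm_eq_abs, abs_of_nonpos (by linarith), neg_sub,
        sub_mul, h6, one_mul]
    have e5 : δ ζ - (1 - ‖a‖) ≤ ‖(1:ℂ) - conj a * z‖ := by
      have t0 : (1:ℂ) - conj ζa * z = (1 - conj a * z) - (conj ζa - conj a) * z := by
        ring
      have t1 : ‖(1:ℂ) - conj ζa * z‖ ≤ ‖(1:ℂ) - conj a * z‖ + ‖(conj ζa - conj a) * z‖ := by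
        rw [t0]
        exact norm_sub_le _ _
      have t2 : ‖(conj ζa - conj a) * z‖ ≤ 1 - ‖a‖ := by
        rw [norm_mul, ← map_sub, RCLike.norm_conj]
        have : ‖ζa - a‖ = 1 - ‖a‖ := by rw [norm_sub_rev, e4]
        rw [this]
        calc (1 - ‖a‖) * ‖z‖ ≤ (1 - ‖a‖) * 1 := by
              exact mul_le_mul_of_nonneg_left hz h1a.le
          _ = 1 - ‖a‖ := mul_one _
      rw [e2] at t1
      linarith
    have e6 : δmin/2 ≤ ‖(1:ℂ) - conj a * z‖ := by
      have : δmin/2 ≤ δ ζ - (1 - ‖a‖) := by linarith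
      linarith
    have e7 : (δmin/2)^2 ≤ normSq (1 - conj a * z) := by
      rw [normSq_eq_norm_sq]
      nlinarith
    exact Real.log_le_log (by positivity) e7
  have hbd2 : c * (ν Cᶜ).toReal ≤ ∫ z in Cᶜ, Real.log (normSq (1 - conj a * z)) ∂ν := by
    have := setIntegral_mono_ae_restrict (integrableOn_const (measure_ne_top _ _))
      hint.integrableOn hptCc
    calc c * (ν Cᶜ).toReal = ∫ _ in Cᶜ, c ∂ν := by
          rw [setIntegral_const, smul_eq_mul, mul_comm, Measure.real]
      _ ≤ _ := this
  have hsplit : ∫ z, Real.log (normSq (1 - conj a * z)) ∂ν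
      = (∫ z in C, Real.log (normSq (1 - conj a * z)) ∂ν)
        + ∫ z in Cᶜ, Real.log (normSq (1 - conj a * z)) ∂ν :=
    (integral_add_compl hCmeas hint).symm
  -- auxiliary numeric facts
  have hμC1 : (ν C).toReal ≤ β := hβζ
  have hμCc1 : (ν Cᶜ).toReal ≤ 1 := by
    have h := prob_le_one (μ := ν) (s := Cᶜ)
    have := (ENNReal.toReal_le_toReal (measure_ne_top ν _) (by norm_num)).mpr h
    simpa using this
  have hlogpow : Real.log ((1-‖a‖)^2) = 2*L := by
    rw [Real.log_pow, hL]
    norm_num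
  have hμC0 : 0 ≤ (ν C).toReal := ENNReal.toReal_nonneg
  have hμCc0 : 0 ≤ (ν Cᶜ).toReal := ENNReal.toReal_nonneg
  have hcap1 : β * (2*L) ≤ Real.log ((1-‖a‖)^2) * (ν C).toReal := by
    rw [hlogpow]
    calc β * (2*L) = (2*L) * β := mul_comm _ _
      _ ≤ (2*L) * (ν C).toReal := by
          apply mul_le_mul_of_nonpos_left hμC1 (by linarith)
      _ = (2*L) * (ν C).toReal := rfl
  have hcap2 : c ≤ c * (ν Cᶜ).toReal := by
    calc c = c * 1 := (mul_one c).symm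
      _ ≤ c * (ν Cᶜ).toReal := mul_le_mul_of_nonpos_left hμCc1 hc0
  have hlog2 : Real.log (1 - normSq a) ≤ Real.log 2 + L := by
    have hpos : 0 < 1 - normSq a := by
      have := normSq_lt_one ha1
      linarith
    have hnsq : normSq a = ‖a‖^2 := by rw [normSq_eq_norm_sq]
    have h1 : 1 - normSq a ≤ 2*(1-‖a‖) := by nlinarith [norm_nonneg a]
    calc Real.log (1 - normSq a) ≤ Real.log (2*(1-‖a‖)) := Real.log_le_log hpos h1
      _ = Real.log 2 + L := Real.log_mul (by norm_num) h1a.ne'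
  have hKL : Real.log 2 - c < (2*β-1)*L := by
    have := mul_lt_mul_of_neg_left hLK h2β
    rwa [hK, mul_div_cancel₀ _ h2β.ne] at this
  have hsum : 2*β*L + c ≤ ∫ z, Real.log (normSq (1 - conj a * z)) ∂ν := by
    rw [hsplit]
    have : β * (2*L) = 2*β*L := by ring
    linarith [hbd1, hbd2, hcap1, hcap2]
  linarith

end CGaux

/-- Center-of-gravity balancing lemma (Szegő 1954, Hersch 1970): for a Borel
probability measure on the closed unit disc assigning zero mass to every point
of the boundary circle, some Möbius automorphism of the disc balances the
center of gravity at the origin. -/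
theorem stmt_3 (μ : Measure ℂ) [IsProbabilityMeasure μ]
    (hsupp : μ (Metric.closedBall (0 : ℂ) 1) = 1)
    (hatom : ∀ ζ : ℂ, ‖ζ‖ = 1 → μ {ζ} = 0) :
    ∃ a : ℂ, ‖a‖ < 1 ∧
      ∫ z in Metric.closedBall (0 : ℂ) 1,
        (z - a) / (1 - (starRingEnd ℂ) a * z) ∂μ = 0 := by
  classical
  set ν : Measure ℂ := μ.restrict (Metric.closedBall (0:ℂ) 1) with hν
  have hD : MeasurableSet (Metric.closedBall (0:ℂ) 1) := measurableSet_closedBall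
  haveI : IsProbabilityMeasure ν := ⟨by rw [hν, Measure.restrict_apply_univ]; exact hsupp⟩
  have hae : ∀ᵐ z ∂ν, ‖z‖ ≤ 1 := by
    filter_upwards [ae_restrict_mem hD] with z hz
    rwa [Metric.mem_closedBall, dist_zero_right] at hz
  have hatomν : ∀ ζ : ℂ, ‖ζ‖ = 1 → ν {ζ} = 0 := by
    intro ζ hζ
    have h1 : ν {ζ} ≤ μ {ζ} := Measure.restrict_apply_le _ _
    have h2 := hatom ζ (by exact hζ)
    exact le_antisymm (le_trans h1 (le_of_eq h2)) zero_le
  set h : ℂ → ℝ := fun x =>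
    (∫ z, Real.log (Complex.normSq (1 - (starRingEnd ℂ) x * z)) ∂ν)
      - Real.log (1 - Complex.normSq x) with hh
  obtain ⟨r, hr0, hr1, hcoer⟩ := CGaux.coercive ν hae hatomν
  have hcompact : IsCompact (Metric.closedBall (0:ℂ) r) := isCompact_closedBall _ _
  have hcont : ContinuousOn h (Metric.closedBall (0:ℂ) r) := by
    intro x hx
    have hx1 : ‖x‖ < 1 := by
      rw [Metric.mem_closedBall, dist_zero_right] at hx
      linarith
    apply ContinuousAt.continuousWithinAt
    have h2 : ContinuousAt (fun y : ℂ => Real.log (1 - Complex.normSq y)) x := by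
      have hne : (1:ℝ) - Complex.normSq x ≠ 0 := by
        have := CGaux.normSq_lt_one hx1
        linarith
      exact ContinuousAt.comp (x := x) (Real.continuousAt_log hne)
        ((continuous_const.sub Complex.continuous_normSq).continuousAt)
    exact (CGaux.continuousAt_integral_log ν hae hx1).sub h2
  obtain ⟨a, haK, hmin⟩ := hcompact.exists_isMinOn
    ⟨0, Metric.mem_closedBall_self hr0.le⟩ hcont
  have ha_le : ‖a‖ ≤ r := by
    rwa [Metric.mem_closedBall, dist_zero_right] at haK
  have ha1 : ‖a‖ < 1 := lt_of_le_of_lt ha_le hr1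
  have h0val : h 0 = 0 := by
    simp [hh]
  have hha : h a ≤ 0 :=
    le_trans (hmin (Metric.mem_closedBall_self hr0.le)) h0val.le
  have halt : ‖a‖ < r := by
    by_contra hcon
    push_neg at hcon
    have h3 : 0 < h a := by
      simp only [hh]
      exact hcoer a hcon ha1
    linarith
  have hlocal : IsLocalMin h a :=
    hmin.isLocalMin (Metric.closedBall_mem_nhds_of_mem
      (by rw [Metric.mem_ball, dist_zero_right]; exact halt))
  have hs0 : (0:ℝ) < 1 - Complex.normSq a := by
    have := CGaux.normSq_lt_one ha1
    linarith
  have hEQ : ∀ v : ℂ, ‖v‖ = 1 →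
      (∫ z, (-(2*(((1:ℂ) - (starRingEnd ℂ) a * z)
            * (starRingEnd ℂ) ((starRingEnd ℂ) v * z)).re))
          / Complex.normSq (1 - (starRingEnd ℂ) a * z) ∂ν)
        = -(2*(a * (starRingEnd ℂ) v).re / (1 - Complex.normSq a)) := by
    intro v hv
    obtain ⟨hint, hder⟩ := CGaux.deriv_under_integral ν hae ha1 v hv
    have hder2 := CGaux.hasDerivAt_logOneSub a v ha1
    have hslice : HasDerivAt (fun t : ℝ => h (a + t • v))
        ((∫ z, (-(2*(((1:ℂ) - (starRingEnd ℂ) a * z)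
              * (starRingEnd ℂ) ((starRingEnd ℂ) v * z)).re))
            / Complex.normSq (1 - (starRingEnd ℂ) a * z) ∂ν)
          + 2*(a * (starRingEnd ℂ) v).re / (1 - Complex.normSq a)) 0 := by
      have h3 := hder.add hder2
      have h4 : (fun t : ℝ => h (a + t • v))
          = fun t : ℝ =>
            (∫ z, Real.log (Complex.normSq (1 - (starRingEnd ℂ) (a + t • v) * z)) ∂ν)
              + -Real.log (1 - Complex.normSq (a + t • v)) := by
        funext t
        simp only [hh, sub_eq_add_neg]
      rw [h4]
      exact h3
    have hlm : IsLocalMin (fun t : ℝ => h (a + t • v)) 0 := by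
      have hg : Filter.Tendsto (fun t : ℝ => a + t • v) (nhds 0) (nhds a) := by
        have hgc : Continuous (fun t : ℝ => a + t • v) :=
          continuous_const.add (continuous_id.smul continuous_const)
        have h5 := hgc.continuousAt (x := 0)
        rwa [ContinuousAt, zero_smul, add_zero] at h5
      have h6 := hg.eventually hlocal
      exact h6.mono fun t ht => by simpa using ht
    have h8 := hlm.deriv_eq_zero
    rw [hslice.deriv] at h8
    linarith
  have hIint : Integrable (fun z : ℂ => z / (1 - (starRingEnd ℂ) a * z)) ν :=
    CGaux.integrable_div ν hae ha1
  set Iν : ℂ := ∫ z, z / (1 - (starRingEnd ℂ) a * z) ∂ν with hIdef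
  have hEQ2 : ∀ v : ℂ, ‖v‖ = 1 →
      ((starRingEnd ℂ) v * Iν).re
        = ((starRingEnd ℂ) v * (((1 - Complex.normSq a)⁻¹ : ℝ) • a)).re := by
    intro v hv
    have h1 := hEQ v hv
    have h2 : (fun z : ℂ => (-(2*(((1:ℂ) - (starRingEnd ℂ) a * z)
          * (starRingEnd ℂ) ((starRingEnd ℂ) v * z)).re))
        / Complex.normSq (1 - (starRingEnd ℂ) a * z))
        = fun z : ℂ => -2 * ((starRingEnd ℂ) v * (z / (1 - (starRingEnd ℂ) a * z))).re := by
      funext z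
      exact CGaux.re_div_identity v z _
    rw [h2] at h1
    have h3 : Integrable (fun z : ℂ =>
        (starRingEnd ℂ) v * (z / (1 - (starRingEnd ℂ) a * z))) ν := hIint.const_mul _
    have h4 : ∫ z, -2 * ((starRingEnd ℂ) v * (z / (1 - (starRingEnd ℂ) a * z))).re ∂ν
        = -2 * ((starRingEnd ℂ) v * Iν).re := by
      rw [MeasureTheory.integral_const_mul]
      congr 1
      have h5 := integral_re h3
      have h6 : ∫ z, (starRingEnd ℂ) v * (z / (1 - (starRingEnd ℂ) a * z)) ∂ν
          = (starRingEnd ℂ) v * Iν := MeasureTheory.integral_const_mul _ _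
      rw [h6] at h5
      simpa only [RCLike.re_to_complex] using h5
    rw [h4] at h1
    have h7 : (starRingEnd ℂ) v * (((1 - Complex.normSq a)⁻¹ : ℝ) • a)
        = ((1 - Complex.normSq a)⁻¹ : ℝ) • ((starRingEnd ℂ) v * a) := mul_smul_comm _ _ _
    rw [h7, Complex.smul_re]
    have h8 : ((starRingEnd ℂ) v * a).re = (a * (starRingEnd ℂ) v).re := by rw [mul_comm]
    rw [h8]
    have h9 : 2*(a * (starRingEnd ℂ) v).re / (1 - Complex.normSq a)
        = 2*((1 - Complex.normSq a)⁻¹ * (a * (starRingEnd ℂ) v).re) := by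
      rw [div_eq_mul_inv]
      ring
    rw [h9] at h1
    have : (1 - Complex.normSq a)⁻¹ • (a * (starRingEnd ℂ) v).re
        = (1 - Complex.normSq a)⁻¹ * (a * (starRingEnd ℂ) v).re := rfl
    rw [this]
    linarith
  have hJ : Iν = ((1 - Complex.normSq a)⁻¹ : ℝ) • a := by
    have hv1 := hEQ2 1 (by simp)
    have hvI := hEQ2 Complex.I (by simp)
    apply Complex.ext
    · simpa using hv1
    · simpa [Complex.conj_I, Complex.mul_re, Complex.I_re, Complex.I_im] using hvI
  refine ⟨a, ?_, ?_⟩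
  · exact ha1
  · have hsm : Integrable (fun z : ℂ =>
        ((1 - Complex.normSq a : ℝ) : ℂ) * (z / (1 - (starRingEnd ℂ) a * z))) ν :=
      hIint.const_mul _
    have hcongr : ∫ z, (z - a) / (1 - (starRingEnd ℂ) a * z) ∂ν
        = ∫ z, (((1 - Complex.normSq a : ℝ) : ℂ)
            * (z / (1 - (starRingEnd ℂ) a * z)) - a) ∂ν := by
      refine integral_congr_ae ?_
      filter_upwards [hae] with z hz
      exact CGaux.final_identity ha1 hz
    show ∫ z, (z - a) / (1 - (starRingEnd ℂ) a * z) ∂ν = 0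
    rw [hcongr, integral_sub hsm (integrable_const a), MeasureTheory.integral_const_mul,
      integral_const, probReal_univ, one_smul, ← hIdef, hJ,
      Complex.real_smul, ← mul_assoc, ← Complex.ofReal_mul,
      mul_inv_cancel₀ hs0.ne', Complex.ofReal_one, one_mul, sub_self]
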